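/- arXiv:2201.07621 — 4 statements merged into one kernel-verified Lean document; each statement's English description precedes it below -/
import Mathlib

section
/- Let d = p + q and let Σ be a real symmetric positive semi-definite d × d matrix with diagonal blocks Σ_1 (p × p) and Σ_2 (q × q), both positive definite. Let Σ_0 be the block-diagonal matrix with diagonal blocks Σ_1 and Σ_2. Then the spectrum of Σ Σ_0^{-1} coincides with the spectrum of the symmetric positive semi-definite matrix Σ_0^{-1/2} Σ Σ_0^{-1/2}; in particular, all eigenvalues of Σ Σ_0^{-1} are real, nonnegative, and contained in [0, 2]. -/
open Matrix

section
open scoped ComplexOrder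

/-- The positive semidefinite square root of a positive semidefinite matrix
(the definition `Matrix.PosSemidef.sqrt` of the older Mathlib, removed since). -/
noncomputable def Matrix.PosSemidef.sqrt {n 𝕜 : Type*} [Fintype n] [DecidableEq n] [RCLike 𝕜]
    (A : Matrix n n 𝕜) (hA : A.PosSemidef) : Matrix n n 𝕜 :=
  hA.1.eigenvectorUnitary.1 * diagonal ((↑) ∘ (√·) ∘ hA.1.eigenvalues) *
  (star hA.1.eigenvectorUnitary : Matrix n n 𝕜)

end

section SqrtAux
open scoped ComplexOrder
variable {n 𝕜 : Type*} [Fintype n] [DecidableEq n] [RCLike 𝕜]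
lemma Matrix.PosSemidef.posSemidef_sqrt {A : Matrix n n 𝕜} (hA : A.PosSemidef) :
    hA.sqrt.PosSemidef := by
  unfold Matrix.PosSemidef.sqrt
  rw [star_eq_conjTranspose]
  refine (posSemidef_diagonal_iff.2 fun i => ?_).mul_mul_conjTranspose_same _
  simp only [Function.comp_apply]
  exact RCLike.ofReal_nonneg.2 (Real.sqrt_nonneg _)
lemma Matrix.PosSemidef.sqrt_mul_self {A : Matrix n n 𝕜} (hA : A.PosSemidef) :
    hA.sqrt * hA.sqrt = A := by
  unfold Matrix.PosSemidef.sqrt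
  have hu : (star hA.1.eigenvectorUnitary : Matrix n n 𝕜) * hA.1.eigenvectorUnitary.1 = 1 :=
    Unitary.coe_star_mul_self _
  have hd : diagonal (((↑) ∘ (√·) ∘ hA.1.eigenvalues) : n → 𝕜) *
      diagonal ((↑) ∘ (√·) ∘ hA.1.eigenvalues) = diagonal (RCLike.ofReal ∘ hA.1.eigenvalues) := by
    rw [diagonal_mul_diagonal]
    congr 1; funext i
    simp only [Function.comp_apply]
    rw [← RCLike.ofReal_mul, Real.mul_self_sqrt (hA.eigenvalues_nonneg i)]
  calc _ = hA.1.eigenvectorUnitary.1 * (diagonal (((↑) ∘ (√·) ∘ hA.1.eigenvalues) : n → 𝕜) *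
      ((star hA.1.eigenvectorUnitary : Matrix n n 𝕜) * hA.1.eigenvectorUnitary.1) *
      diagonal ((↑) ∘ (√·) ∘ hA.1.eigenvalues)) * (star hA.1.eigenvectorUnitary : Matrix n n 𝕜) := by
        simp only [mul_assoc]
    _ = A := by
      rw [hu, mul_one, hd]
      conv_rhs => rw [hA.1.spectral_theorem]
      simp [Unitary.conjStarAlgAut_apply, mul_assoc]
end SqrtAux

open scoped ComplexOrder

section Aux
variable {n : Type*} [Fintype n] [DecidableEq n]

lemma auxPosDefOfIsUnit {M : Matrix n n ℝ} (hM : M.PosSemidef) (hU : IsUnit M) : M.PosDef := by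
  refine PosDef.of_dotProduct_mulVec_pos hM.1 fun x hx => (hM.dotProduct_mulVec_nonneg x).lt_of_ne' fun h => hx ?_
  have h0 : M *ᵥ x = 0 := (hM.dotProduct_mulVec_zero_iff x).1 h
  have := Matrix.mulVec_injective_iff_isUnit.mpr hU (a₁ := x) (a₂ := 0) (by simpa using h0)
  simpa using this

lemma auxMapPSD {M : Matrix n n ℝ} (hM : M.PosSemidef) :
    (M.map (algebraMap ℝ ℂ)).PosSemidef := by
  have hh : hM.sqrtᴴ = hM.sqrt := hM.posSemidef_sqrt.1
  have hct : (hM.sqrt.map (algebraMap ℝ ℂ))ᴴ = hM.sqrtᴴ.map (algebraMap ℝ ℂ) := by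
    rw [← Matrix.conjTranspose_map _ (fun a => by simp [Complex.conj_ofReal])]
  have : M.map (algebraMap ℝ ℂ)
      = (hM.sqrt.map (algebraMap ℝ ℂ))ᴴ * (hM.sqrt.map (algebraMap ℝ ℂ)) := by
    rw [hct, hh, ← Matrix.map_mul, hM.sqrt_mul_self]
  rw [this]
  exact Matrix.posSemidef_conjTranspose_mul_self _

end Aux

/-- For a positive semi-definite block matrix `A` with positive definite diagonal
blocks, the spectrum of `A A₀⁻¹` (with `A₀` the block-diagonal part) coincides with
the spectrum of the symmetric positive semi-definite matrix `A₀^{-1/2} A A₀^{-1/2}`;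
in particular all eigenvalues of `A A₀⁻¹` are real, nonnegative and lie in `[0,2]`. -/
theorem spectrum_blockRescaled_subset_Icc
    (p q : ℕ) (hp : 1 ≤ p) (hq : 1 ≤ q)
    (A : Matrix (Fin p ⊕ Fin q) (Fin p ⊕ Fin q) ℝ) (hA : A.PosSemidef)
    (h1 : A.toBlocks₁₁.PosDef) (h2 : A.toBlocks₂₂.PosDef)
    (A₀ : Matrix (Fin p ⊕ Fin q) (Fin p ⊕ Fin q) ℝ)
    (hA₀def : A₀ = Matrix.fromBlocks A.toBlocks₁₁ 0 0 A.toBlocks₂₂)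
    (hA₀ : A₀.PosSemidef) :
    spectrum ℝ (A * A₀⁻¹) = spectrum ℝ (hA₀.sqrt⁻¹ * A * hA₀.sqrt⁻¹) ∧
    (hA₀.sqrt⁻¹ * A * hA₀.sqrt⁻¹).PosSemidef ∧
    (∀ z ∈ spectrum ℂ ((A * A₀⁻¹).map (algebraMap ℝ ℂ)),
      ∃ x : ℝ, z = (x : ℂ) ∧ 0 ≤ x ∧ x ≤ 2) := by
  set S := hA₀.sqrt with hSdef
  have hSps : S.PosSemidef := hA₀.posSemidef_sqrt
  have hSS : S * S = A₀ := hA₀.sqrt_mul_self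
  have hdetA₀ : A₀.det ≠ 0 := by
    rw [hA₀def, Matrix.det_fromBlocks_zero₂₁]
    exact mul_ne_zero h1.det_pos.ne' h2.det_pos.ne'
  have hdetS : S.det ≠ 0 := fun h => hdetA₀ (by rw [← hSS, det_mul, h, mul_zero])
  have hSU : IsUnit S := (Matrix.isUnit_iff_isUnit_det _).2 hdetS.isUnit
  have hSinv : S * S⁻¹ = 1 := mul_nonsing_inv _ hdetS.isUnit
  have hSinv' : S⁻¹ * S = 1 := nonsing_inv_mul _ hdetS.isUnit
  have hA₀inv : A₀⁻¹ = S⁻¹ * S⁻¹ := by rw [← hSS, Matrix.mul_inv_rev]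
  set M := S⁻¹ * A * S⁻¹ with hMdef
  have hconj : A * A₀⁻¹ = S * M * S⁻¹ := by
    rw [hA₀inv, hMdef]
    calc A * (S⁻¹ * S⁻¹) = (S * S⁻¹) * (A * (S⁻¹ * S⁻¹)) := by rw [hSinv, one_mul]
    _ = S * (S⁻¹ * A * S⁻¹) * S⁻¹ := by noncomm_ring
  -- inverse hermitian
  have hSinvH : S⁻¹ᴴ = S⁻¹ := (hSps.1.inv).eq
  have hMps : M.PosSemidef := by
    have := hA.mul_mul_conjTranspose_same S⁻¹
    rwa [hSinvH] at this
  -- spectrum equality over ℝ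
  have hspec : spectrum ℝ (A * A₀⁻¹) = spectrum ℝ M := by
    rw [hconj, ← hSU.unit_spec, ← Matrix.coe_units_inv, spectrum.units_conjugate]
  refine ⟨hspec, hMps, ?_⟩
  -- the [0,2] part
  set J : Matrix (Fin p ⊕ Fin q) (Fin p ⊕ Fin q) ℝ := fromBlocks 1 0 0 (-1) with hJdef
  have hJA : (2:ℝ) • A₀ - A = J * A * Jᴴ := by
    conv_lhs => rw [hA₀def, ← fromBlocks_toBlocks A]
    conv_rhs => rw [← fromBlocks_toBlocks A]
    rw [hJdef, fromBlocks_conjTranspose, fromBlocks_multiply, fromBlocks_multiply,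
      fromBlocks_smul]
    ext (i | i) (j | j) <;>
      simp [fromBlocks_apply₁₁, fromBlocks_apply₁₂, fromBlocks_apply₂₁, fromBlocks_apply₂₂,
        two_smul] <;> ring_nf <;> simp [Matrix.sub_apply, Matrix.neg_apply]
  have hNps : ((2:ℝ) • A₀ - A).PosSemidef := hJA ▸ hA.mul_mul_conjTranspose_same J
  have hNps' : (S⁻¹ * ((2:ℝ) • A₀ - A) * S⁻¹).PosSemidef := by
    have := hNps.mul_mul_conjTranspose_same S⁻¹
    rwa [hSinvH] at this
  have hA₀conj : S⁻¹ * A₀ * S⁻¹ = 1 := by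
    rw [← hSS, ← mul_assoc, hSinv', one_mul, hSinv]
  have h2M : S⁻¹ * ((2:ℝ) • A₀ - A) * S⁻¹ = (2:ℝ) • (1 : Matrix _ _ ℝ) - M := by
    rw [mul_sub, sub_mul, hMdef, mul_smul_comm, smul_mul_assoc, hA₀conj]
  have h2Mps : ((2:ℝ) • (1 : Matrix _ _ ℝ) - M).PosSemidef := h2M ▸ hNps'
  -- complexify
  intro z hz
  set f := algebraMap ℝ ℂ with hfdef
  have hmul : ∀ (X Y : Matrix (Fin p ⊕ Fin q) (Fin p ⊕ Fin q) ℝ),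
      (X * Y).map f = X.map f * Y.map f := fun X Y => Matrix.map_mul
  have hone : (1 : Matrix (Fin p ⊕ Fin q) (Fin p ⊕ Fin q) ℝ).map f = 1 :=
    Matrix.map_one f (map_zero f) (map_one f)
  set uc : (Matrix (Fin p ⊕ Fin q) (Fin p ⊕ Fin q) ℂ)ˣ :=
    ⟨S.map f, S⁻¹.map f, by rw [← hmul, hSinv, hone], by rw [← hmul, hSinv', hone]⟩ with hucdef
  have hzM : z ∈ spectrum ℂ (M.map f) := by
    rw [hconj, hmul, hmul] at hz
    have heq : (S.map f) * (M.map f) * (S⁻¹.map f)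
        = (uc : Matrix (Fin p ⊕ Fin q) (Fin p ⊕ Fin q) ℂ) * (M.map f)
          * ((uc⁻¹ : (Matrix (Fin p ⊕ Fin q) (Fin p ⊕ Fin q) ℂ)ˣ) :
              Matrix (Fin p ⊕ Fin q) (Fin p ⊕ Fin q) ℂ) := rfl
    rwa [heq, spectrum.units_conjugate] at hz
  -- eigenvector
  rw [spectrum.mem_iff] at hzM
  have hdet0 : (algebraMap ℂ (Matrix (Fin p ⊕ Fin q) (Fin p ⊕ Fin q) ℂ) z - M.map f).det = 0 := by
    by_contra h
    exact hzM ((Matrix.isUnit_iff_isUnit_det _).2 (Ne.isUnit h))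
  obtain ⟨v, hv0, hv⟩ := (Matrix.exists_mulVec_eq_zero_iff).2 hdet0
  have hMv : (M.map f) *ᵥ v = z • v := by
    rw [sub_mulVec, Algebra.algebraMap_eq_smul_one, smul_mulVec, one_mulVec,
      sub_eq_zero] at hv
    exact hv.symm
  set r : ℂ := star v ⬝ᵥ v with hrdef
  have hr : 0 < r := dotProduct_star_self_pos_iff.mpr hv0
  set c : ℂ := star v ⬝ᵥ ((M.map f) *ᵥ v) with hcdef
  have hc0 : 0 ≤ c := (auxMapPSD hMps).dotProduct_mulVec_nonneg v
  have hcz : c = z * r := by rw [hcdef, hMv, dotProduct_smul, smul_eq_mul]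
  have hmap2 : ((2:ℝ) • (1 : Matrix (Fin p ⊕ Fin q) (Fin p ⊕ Fin q) ℝ) - M).map f
      = (2:ℂ) • 1 - M.map f := by
    ext i j
    by_cases h : i = j <;>
      simp [hfdef, Matrix.map_apply, Matrix.sub_apply, Matrix.smul_apply, Matrix.one_apply, h]
  have h2c : 0 ≤ (2:ℂ) * r - c := by
    have := (auxMapPSD h2Mps).dotProduct_mulVec_nonneg v
    rwa [hmap2, sub_mulVec, dotProduct_sub, smul_mulVec, one_mulVec, dotProduct_smul,
      smul_eq_mul, ← hrdef, ← hcdef] at this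
  have hrre : 0 < r.re := (Complex.lt_def.mp hr).1
  have hrim : r.im = 0 := ((Complex.lt_def.mp hr).2).symm
  have hcre : 0 ≤ c.re := (Complex.le_def.mp hc0).1
  have hcim : c.im = 0 := ((Complex.le_def.mp hc0).2).symm
  have hrr : r = ((r.re : ℝ) : ℂ) := Complex.ext rfl (by simp [hrim])
  have hcc : c = ((c.re : ℝ) : ℂ) := Complex.ext rfl (by simp [hcim])
  have hrne : r ≠ 0 := hr.ne'
  refine ⟨c.re / r.re, ?_, div_nonneg hcre hrre.le, ?_⟩
  · have hzcr : z = c / r := (eq_div_iff hrne).mpr hcz.symm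
    have hcast : ((c.re / r.re : ℝ) : ℂ) = c / r := by
      rw [Complex.ofReal_div, ← hcc, ← hrr]
    rw [hcast]
    exact hzcr
  · have h2re : 0 ≤ 2 * r.re - c.re := by
      have := (Complex.le_def.mp h2c).1
      simpa using this
    rw [div_le_iff₀ hrre]
    linarith
end

section
/- For every integer k ≥ 0, Σ_{η=0}^{⌊k/2⌋} binom(k, 2η) · binom(2η, η) · 4^{−η} = binom(2k, k) / 2^k, which equals 2^k Γ(k+1/2)/(√π · k!). -/
open Polynomial in
lemma coeff_one_add_X_sq_pow (j n : ℕ) :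
    (((1 : ℕ[X]) + X ^ 2) ^ j).coeff n = if 2 ∣ n then j.choose (n / 2) else 0 := by
  have h : ((1 : ℕ[X]) + X ^ 2) ^ j = expand ℕ 2 ((1 + X) ^ j) := by
    simp [map_pow, map_add, expand_X]
  rw [h, coeff_expand (by norm_num)]
  split <;> simp [coeff_one_add_X_pow]

open Polynomial in
lemma key (k : ℕ) :
    ∑ η ∈ Finset.range (k / 2 + 1),
      Nat.choose k (2 * η) * Nat.choose (2 * η) η * 2 ^ (k - 2 * η) =
        Nat.choose (2 * k) k := by
  have h2 : (((1 : ℕ[X]) + X) ^ (2 * k)).coeff k = (2 * k).choose k := by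
    simp [coeff_one_add_X_pow]
  have h1 : ((1 : ℕ[X]) + X) ^ (2 * k) = ((1 + X ^ 2) + 2 * X) ^ k := by
    rw [pow_mul]; congr 1; ring
  rw [h1, add_pow, finset_sum_coeff] at h2
  have hterm : ∀ j ∈ Finset.range (k + 1),
      (((1 : ℕ[X]) + X ^ 2) ^ j * (2 * X) ^ (k - j) * (k.choose j : ℕ[X])).coeff k
        = if 2 ∣ j then k.choose j * 2 ^ (k - j) * j.choose (j / 2) else 0 := by
    intro j hj
    rw [Finset.mem_range, Nat.lt_succ_iff] at hj
    have : ((1 : ℕ[X]) + X ^ 2) ^ j * (2 * X) ^ (k - j) * (k.choose j : ℕ[X])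
        = ((k.choose j * 2 ^ (k - j) : ℕ) : ℕ[X]) * (((1 + X ^ 2) ^ j) * X ^ (k - j)) := by
      push_cast
      ring
    rw [this, coeff_natCast_mul, coeff_mul_X_pow', if_pos (Nat.sub_le k j),
      Nat.sub_sub_self hj, coeff_one_add_X_sq_pow]
    split <;> simp
  rw [Finset.sum_congr rfl hterm] at h2
  rw [← h2]
  have himg : (Finset.range (k / 2 + 1)).image (fun η => 2 * η) ⊆ Finset.range (k + 1) := by
    intro j hj
    simp only [Finset.mem_image, Finset.mem_range, Nat.lt_succ_iff] at hj ⊢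
    obtain ⟨η, hη, rfl⟩ := hj
    omega
  have hzero : ∀ j ∈ Finset.range (k + 1),
      j ∉ (Finset.range (k / 2 + 1)).image (fun η => 2 * η) →
      (if 2 ∣ j then k.choose j * 2 ^ (k - j) * j.choose (j / 2) else 0) = 0 := by
    intro j hj hj2
    rw [if_neg]
    intro ⟨η, hη⟩
    apply hj2
    simp only [Finset.mem_image, Finset.mem_range, Nat.lt_succ_iff] at hj ⊢
    exact ⟨η, by omega, by omega⟩
  rw [← Finset.sum_subset himg hzero, Finset.sum_image (fun a _ b _ h => Nat.eq_of_mul_eq_mul_left (by norm_num : 0 < 2) h)]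
  refine Finset.sum_congr rfl fun η hη => ?_
  rw [if_pos ⟨η, by ring⟩, Nat.mul_div_cancel_left η (by norm_num)]
  ring

lemma gamma_half (k : ℕ) :
    Real.Gamma (k + 1 / 2) = (2 * k).factorial / (4 ^ k * k.factorial) * Real.sqrt Real.pi := by
  induction k with
  | zero =>
    rw [show ((0:ℕ):ℝ) + 1/2 = 1/2 by norm_num, Real.Gamma_one_half_eq]
    simp
  | succ n ih =>
    have h : (((n:ℕ)+1 : ℕ) : ℝ) + 1 / 2 = (n + 1 / 2) + 1 := by push_cast; ring
    rw [h, Real.Gamma_add_one (by positivity), ih]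
    have hf : (((2 * (n+1)).factorial : ℕ) : ℝ) = (2*n+2) * ((2*n+1) * (2*n).factorial) := by
      rw [show 2*(n+1) = (2*n+1)+1 by ring, Nat.factorial_succ, Nat.factorial_succ]
      push_cast; ring
    have hg : (((n+1).factorial : ℕ) : ℝ) = (n+1) * n.factorial := by
      rw [Nat.factorial_succ]; push_cast; ring
    rw [hf, hg]
    have h1 : (n.factorial : ℝ) ≠ 0 := by positivity
    field_simp
    ring

open Real Finset

/-- `∑_{η=0}^{⌊k/2⌋} C(k,2η) C(2η,η) 4^{−η} = C(2k,k)/2ᵏ = 2ᵏ Γ(k+1/2)/(√π k!)`. -/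
theorem sum_binomial_eq_centralBinom_div (k : ℕ) :
    (∑ η ∈ Finset.range (k / 2 + 1),
        (Nat.choose k (2 * η) : ℝ) * (Nat.choose (2 * η) η : ℝ) / 4 ^ η) =
      (Nat.choose (2 * k) k : ℝ) / 2 ^ k ∧
    (Nat.choose (2 * k) k : ℝ) / 2 ^ k =
      2 ^ k * Real.Gamma (k + 1 / 2) / (Real.sqrt Real.pi * (Nat.factorial k : ℝ)) := by
  constructor
  · rw [eq_div_iff (by positivity : (2:ℝ)^k ≠ 0), Finset.sum_mul]
    have : ∀ η ∈ Finset.range (k / 2 + 1),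
        (Nat.choose k (2 * η) : ℝ) * (Nat.choose (2 * η) η : ℝ) / 4 ^ η * 2 ^ k
          = ((Nat.choose k (2 * η) * Nat.choose (2 * η) η * 2 ^ (k - 2 * η) : ℕ) : ℝ) := by
      intro η hη
      rw [Finset.mem_range, Nat.lt_succ_iff] at hη
      have h2 : 2 * η ≤ k := by omega
      have hp : (2:ℝ) ^ k = 4 ^ η * 2 ^ (k - 2 * η) := by
        rw [show (4:ℝ) = 2^2 by norm_num, ← pow_mul, ← pow_add]
        congr 1
        omega
      rw [hp]
      push_cast
      field_simp
    rw [Finset.sum_congr rfl this, ← Nat.cast_sum, key]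
  · rw [gamma_half]
    have hCn : Nat.choose (2 * k) k * k.factorial * k.factorial = (2 * k).factorial := by
      have := Nat.choose_mul_factorial_mul_factorial (show k ≤ 2 * k by omega)
      rwa [show 2 * k - k = k by omega] at this
    have hC : ((Nat.choose (2 * k) k : ℕ) : ℝ) * k.factorial * k.factorial
        = (2 * k).factorial := by exact_mod_cast congrArg (Nat.cast : ℕ → ℝ) hCn
    have h4 : (4:ℝ) ^ k = 2 ^ k * 2 ^ k := by
      rw [show (4:ℝ) = 2*2 by norm_num, mul_pow]
    have hs : Real.sqrt Real.pi ≠ 0 := by positivity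
    have hf : (k.factorial : ℝ) ≠ 0 := by positivity
    field_simp
    rw [h4]
    linear_combination (2 ^ k * 2 ^ k) * hC
end

section
/- Let 0 < t < 1 and s > 0, and define h = √(s + t − st), a = (1−h)²/(1−t)², b = (1+h)²/(1−t)², and the Fisher limiting spectral density p_{s,t}(x) = (1−t)/(2π x (s + t x)) · √((b−x)(x−a)) for a ≤ x ≤ b. Then ∫_a^b (x/(x + s/t)) · p_{s,t}(x) dx = t/(s + t). -/
open Real
set_option maxHeartbeats 1000000

lemma fisher_key0 (r q w : ℝ) (hr : 0 < r) (hqr : r < q) (hw : 0 < w)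
    (hw2 : w ^ 2 = q ^ 2 - r ^ 2) :
    ∫ u in (-r)..r, Real.sqrt ((r - u) * (u + r)) / (u + q) ^ 2
      = Real.pi * (q / w - 1) := by
  have hq : 0 < q := hr.trans hqr
  set F : ℝ → ℝ := fun u =>
    -Real.sqrt ((r - u) * (u + r)) / (u + q) - Real.arcsin (u / r)
      + (q / w) * Real.arcsin ((r ^ 2 + q * u) / (r * (u + q))) with hF
  have hle : (-r : ℝ) ≤ r := by linarith
  -- continuity of F on Icc
  have hcont : ContinuousOn F (Set.Icc (-r) r) := by
    have hne : ∀ u ∈ Set.Icc (-r) r, u + q ≠ 0 := by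
      intro u hu; have := hu.1; nlinarith
    apply ContinuousOn.add
    apply ContinuousOn.sub
    · exact ContinuousOn.div
        (Continuous.continuousOn (by continuity))
        (Continuous.continuousOn (by continuity)) hne
    · exact (Real.continuous_arcsin.comp (by continuity)).continuousOn
    · apply ContinuousOn.mul continuousOn_const
      apply Real.continuous_arcsin.comp_continuousOn
      exact ContinuousOn.div (Continuous.continuousOn (by continuity))
        (Continuous.continuousOn (by continuity))
        (fun u hu => by have := hne u hu; positivity)
  -- derivative on Ioo
  have hderiv : ∀ u ∈ Set.Ioo (-r) r,
      HasDerivAt F (Real.sqrt ((r - u) * (u + r)) / (u + q) ^ 2) u := by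
    intro u hu
    obtain ⟨hu1, hu2⟩ := hu
    have huq : 0 < u + q := by linarith
    have hP : 0 < (r - u) * (u + r) := by nlinarith
    set ρ := Real.sqrt ((r - u) * (u + r)) with hρdef
    have hρ : 0 < ρ := Real.sqrt_pos.mpr hP
    have hρ2 : ρ ^ 2 = (r - u) * (u + r) := Real.sq_sqrt hP.le
    -- derivative of sqrt part
    have dP : HasDerivAt (fun y => (r - y) * (y + r)) (-2 * u) u := by
      have := ((hasDerivAt_id u).const_sub r).mul ((hasDerivAt_id u).add_const r)
      exact this.congr_deriv (by simp only [id_eq]; ring)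
    have dρ : HasDerivAt (fun y => Real.sqrt ((r - y) * (y + r))) (-2 * u / (2 * ρ)) u :=
      dP.sqrt hP.ne'
    have d1 : HasDerivAt (fun y => -Real.sqrt ((r - y) * (y + r)) / (y + q))
        ((-(-2 * u / (2 * ρ)) * (u + q) - -ρ * 1) / (u + q) ^ 2) u :=
      (dρ.neg).div ((hasDerivAt_id u).add_const q) huq.ne'
    -- derivative of arcsin(u/r)
    have e1 : Real.sqrt (1 - (u / r) ^ 2) = ρ / r := by
      rw [show 1 - (u / r) ^ 2 = (ρ / r) ^ 2 by
        field_simp; linear_combination -hρ2]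
      exact Real.sqrt_sq (by positivity)
    have hur1 : u / r ≠ -1 := by
      intro hcon; have : u = -r := by field_simp at hcon; linarith
      linarith
    have hur2 : u / r ≠ 1 := by
      intro hcon; have : u = r := by field_simp at hcon; linarith
      linarith
    have d2 : HasDerivAt (fun y => Real.arcsin (y / r))
        (1 / Real.sqrt (1 - (u / r) ^ 2) * (1 / r)) u :=
      by have := (Real.hasDerivAt_arcsin hur1 hur2).comp u ((hasDerivAt_id u).div_const r); exact this
    -- derivative of arcsin(g)
    set g : ℝ := (r ^ 2 + q * u) / (r * (u + q)) with hg
    have e2sq : 1 - g ^ 2 = (w * ρ / (r * (u + q))) ^ 2 := by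
      rw [hg]; field_simp
      linear_combination (-ρ^2) * hw2 + (r^2 - q^2) * hρ2
    have e2 : Real.sqrt (1 - g ^ 2) = w * ρ / (r * (u + q)) := by
      rw [e2sq]; exact Real.sqrt_sq (by positivity)
    have hg2 : (0:ℝ) < 1 - g ^ 2 := by rw [e2sq]; positivity
    have hgne1 : g ≠ -1 := by intro hcon; rw [hcon] at hg2; norm_num at hg2
    have hgne2 : g ≠ 1 := by intro hcon; rw [hcon] at hg2; norm_num at hg2
    have dg0 := (((hasDerivAt_id u).const_mul q).const_add (r ^ 2)).div
        (((hasDerivAt_id u).add_const q).const_mul r)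
        (show r * (u + q) ≠ 0 by positivity)
    have dg : HasDerivAt (fun y => (r ^ 2 + q * y) / (r * (y + q)))
        ((q * (r * (u + q)) - (r ^ 2 + q * u) * r) / (r * (u + q)) ^ 2) u := by
      exact dg0.congr_deriv (by simp only [id_eq, mul_one])
    have d3 : HasDerivAt (fun y => Real.arcsin ((r ^ 2 + q * y) / (r * (y + q))))
        (1 / Real.sqrt (1 - g ^ 2) *
          ((q * (r * (u + q)) - (r ^ 2 + q * u) * r) / (r * (u + q)) ^ 2)) u :=
      by have := (Real.hasDerivAt_arcsin hgne1 hgne2).comp u dg; exact this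
    have dF := (d1.sub d2).add ((d3.const_mul (q / w)))
    refine dF.congr_deriv ?_
    rw [e1, e2, show q * (r * (u + q)) - (r ^ 2 + q * u) * r = r * w ^ 2 from by
      linear_combination (-r) * hw2]
    field_simp
    ring
  -- integrability
  have hint : IntervalIntegrable (fun u => Real.sqrt ((r - u) * (u + r)) / (u + q) ^ 2)
      MeasureTheory.volume (-r) r := by
    apply ContinuousOn.intervalIntegrable
    apply ContinuousOn.div (Continuous.continuousOn (by continuity))
      (Continuous.continuousOn (by continuity))
    intro u hu
    rw [Set.uIcc_of_le hle] at hu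
    have h := hu.1
    have : 0 < u + q := by linarith
    positivity
  have := intervalIntegral.integral_eq_sub_of_hasDeriv_right_of_le hle hcont
    (fun x hx => (hderiv x hx).hasDerivWithinAt) hint
  rw [this, hF]
  have h1 : Real.sqrt ((r - r) * (r + r)) = 0 := by simp
  have h2 : Real.sqrt ((r - -r) * (-r + r)) = 0 := by simp
  have h3 : (r : ℝ) / r = 1 := div_self hr.ne'
  have h4 : (-r : ℝ) / r = -1 := by rw [neg_div, h3]
  have h5 : (r ^ 2 + q * r) / (r * (r + q)) = 1 := by
    rw [div_eq_one_iff_eq (by positivity)]; ring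
  have h6 : (r ^ 2 + q * -r) / (r * (-r + q)) = -1 := by
    rw [div_eq_iff (by nlinarith)]; ring
  simp only [h1, h2, h3, h4, h5, h6, Real.arcsin_one, Real.arcsin_neg_one]
  field_simp
  ring


open Real

/-- First moment identity for the Fisher limiting spectral distribution:
`∫_a^b (x/(x+s/t)) p_{s,t}(x) dx = t/(s+t)`. -/
theorem fisher_I_one (s t : ℝ) (hs : 0 < s) (ht0 : 0 < t) (ht1 : t < 1) :
    let h := Real.sqrt (s + t - s * t)
    let a := (1 - h) ^ 2 / (1 - t) ^ 2
    let b := (1 + h) ^ 2 / (1 - t) ^ 2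
    (∫ x in a..b,
        (x / (x + s / t)) *
          ((1 - t) / (2 * Real.pi * x * (s + t * x)) *
            Real.sqrt ((b - x) * (x - a)))) = t / (s + t) := by
  intro h a b
  have hdef : h = Real.sqrt (s + t - s * t) := rfl
  have hadef : a = (1 - h) ^ 2 / (1 - t) ^ 2 := rfl
  have hbdef : b = (1 + h) ^ 2 / (1 - t) ^ 2 := rfl
  clear_value h a b
  have h1t : (0:ℝ) < 1 - t := by linarith
  have hst : (0:ℝ) < s + t - s * t := by nlinarith
  have hhsq : h ^ 2 = s + t - s * t := by rw [hdef]; exact Real.sq_sqrt hst.le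
  have hhpos : 0 < h := by rw [hdef]; exact Real.sqrt_pos.mpr hst
  have hc : (0:ℝ) < s / t := div_pos hs ht0
  have ha0 : 0 ≤ a := by rw [hadef]; positivity
  have hb0 : 0 < b := by rw [hbdef]; positivity
  have hab : a ≤ b := by
    rw [hadef, hbdef, div_le_div_iff₀ (by positivity) (by positivity)]
    nlinarith
  set m : ℝ := (1 + h ^ 2) / (1 - t) ^ 2 with hm
  set r : ℝ := 2 * h / (1 - t) ^ 2 with hrdef
  set q : ℝ := m + s / t with hq
  set w : ℝ := (s + t) / (t * (1 - t)) with hwdef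
  clear_value m r q w
  have ham : a = -r + m := by rw [hadef, hrdef, hm]; field_simp; ring
  have hbm : b = r + m := by rw [hbdef, hrdef, hm]; field_simp; ring
  have hr : 0 < r := by rw [hrdef]; positivity
  have hqr : r < q := by
    have h2 : q - r = a + s / t := by rw [hq, ham]; ring
    linarith [ha0, hc, h2]
  have hw : 0 < w := by rw [hwdef]; positivity
  have hsum : a + b = (2 + 2 * (s + t - s * t)) / (1 - t) ^ 2 := by
    rw [hadef, hbdef, ← add_div]
    congr 1
    linear_combination 2 * hhsq
  have hprod : a * b = ((1 - s) * (1 - t)) ^ 2 / (1 - t) ^ 4 := by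
    rw [hadef, hbdef, div_mul_div_comm, ← mul_pow, ← mul_pow,
      show (1 - h) * (1 + h) = (1 - s) * (1 - t) from by linear_combination -hhsq]
    ring
  have hw2 : w ^ 2 = q ^ 2 - r ^ 2 := by
    have e : q ^ 2 - r ^ 2 = a * b + (a + b) * (s / t) + (s / t) ^ 2 := by
      rw [hq, ham, hbm]; ring
    rw [e, hprod, hsum, hwdef]
    field_simp
    ring
  -- Step 1: rewrite the integrand
  have hcongr : (∫ x in a..b,
        (x / (x + s / t)) *
          ((1 - t) / (2 * Real.pi * x * (s + t * x)) *
            Real.sqrt ((b - x) * (x - a))))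
      = ∫ x in a..b, (1 - t) / (2 * Real.pi * t) *
          (Real.sqrt ((b - x) * (x - a)) / (x + s / t) ^ 2) := by
    apply intervalIntegral.integral_congr
    intro x hx
    beta_reduce
    rw [Set.uIcc_of_le hab] at hx
    obtain ⟨hx1, hx2⟩ := hx
    rcases eq_or_lt_of_le (ha0.trans hx1) with hx0 | hx0
    · -- x = 0, hence a = 0
      have hxz : x = 0 := hx0.symm
      have haz : a = 0 := le_antisymm (hxz ▸ hx1) ha0
      simp [hxz, haz]
    · have hxc : 0 < x + s / t := by positivity
      have hstx : s + t * x = t * (x + s / t) := by field_simp; ring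
      rw [hstx]
      have hpi := Real.pi_pos
      field_simp
  rw [hcongr, intervalIntegral.integral_const_mul]
  -- Step 2: recenter the integral
  have hshift : (∫ x in a..b, Real.sqrt ((b - x) * (x - a)) / (x + s / t) ^ 2)
      = ∫ u in (-r)..r, Real.sqrt ((r - u) * (u + r)) / (u + q) ^ 2 := by
    have h1 := intervalIntegral.integral_comp_add_right
        (a := -r) (b := r)
        (fun x => Real.sqrt ((b - x) * (x - a)) / (x + s / t) ^ 2) m
    rw [← ham, ← hbm] at h1
    rw [← h1]
    apply intervalIntegral.integral_congr
    intro u hu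
    beta_reduce
    rw [show b - (u + m) = r - u by rw [hbm]; ring,
      show u + m - a = u + r by rw [ham]; ring,
      show u + m + s / t = u + q by rw [hq]; ring]
  rw [hshift, fisher_key0 r q w hr hqr hw hw2]
  -- Step 3: final algebra
  have hpi := Real.pi_ne_zero
  have hstpos : (0:ℝ) < s + t := by linarith
  have e4 : q / w - 1 = 2 * t ^ 2 / ((1 - t) * (s + t)) := by
    rw [hq, hm, hwdef, hhsq]
    field_simp
    ring
  rw [e4]
  field_simp
end

section
/- Let k ≥ 1 be an integer. For 0 < t < 1 define I_k(t) = ∫_0^b (x/(x + 1/t))^k · p_{1,t}(x) dx, where b = 4/(1−t)² and p_{1,t}(x) = (1−t)√((b−x)x)/(2π x (1 + t x)) on (0, b]. Then lim_{t → 1⁻} I_k(t) = binom(2k, k) / 4^k. -/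
open Real Filter MeasureTheory intervalIntegral Set

lemma sin_pow_int (k : ℕ) :
    ∫ x in (0:ℝ)..(π/2), Real.sin x ^ (2*k) = π/2 * (Nat.centralBinom k / 4 ^ k) := by
  induction k with
  | zero => simp
  | succ k ih =>
    have h := integral_sin_pow (2*k) (a := 0) (b := π/2)
    have h2 : 2 * (k+1) = 2*k + 2 := by ring
    rw [h2, h, ih]
    have hc : ((k:ℝ)+1) * (Nat.centralBinom (k+1) : ℝ) = 2 * (2*(k:ℝ)+1) * Nat.centralBinom k := by
      exact_mod_cast Nat.succ_mul_centralBinom_succ k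
    have hk1 : ((k:ℝ)+1) ≠ 0 := by positivity
    simp only [Real.sin_zero, Real.cos_pi_div_two, Real.sin_pi_div_two]
    push_cast
    field_simp
    linear_combination (-(2*π*4^k)) * hc

lemma arcsine_int (k : ℕ) :
    ∫ x in Ioi (0:ℝ), (x/(x+1))^k * (Real.sqrt (4*x)/(2*π*x*(1+x)))
      = Nat.centralBinom k / 4 ^ k := by
  have hπ2 : 0 < π/2 := by positivity
  have himg : (fun φ : ℝ => Real.tan φ ^ 2) '' (Ioo 0 (π/2)) = Ioi (0:ℝ) := by
    apply Subset.antisymm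
    · rintro y ⟨φ, hφ, rfl⟩
      have := Real.tan_pos_of_pos_of_lt_pi_div_two hφ.1 hφ.2
      exact pow_pos this 2
    · rintro y hy
      refine ⟨Real.arctan (Real.sqrt y), ⟨?_, Real.arctan_lt_pi_div_two _⟩, ?_⟩
      · have := Real.arctan_strictMono (Real.sqrt_pos.2 hy)
        simpa using this
      · show Real.tan (Real.arctan (Real.sqrt y)) ^ 2 = y
        rw [Real.tan_arctan, Real.sq_sqrt (le_of_lt hy)]
  have hderiv : ∀ φ ∈ Ioo (0:ℝ) (π/2),
      HasDerivWithinAt (fun φ : ℝ => Real.tan φ ^ 2)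
        (2 * Real.tan φ * (1 / Real.cos φ ^ 2)) (Ioo (0:ℝ) (π/2)) φ := by
    intro φ hφ
    have hc : Real.cos φ ≠ 0 := by
      have : 0 < Real.cos φ := Real.cos_pos_of_mem_Ioo ⟨by linarith [hφ.1, hπ2], hφ.2⟩
      exact this.ne'
    have := ((Real.hasDerivAt_tan hc).pow 2).hasDerivWithinAt
      (s := Ioo (0:ℝ) (π/2))
    simpa [mul_comm, mul_assoc, pow_one, Pi.pow_def] using this
  have hinj : InjOn (fun φ : ℝ => Real.tan φ ^ 2) (Ioo 0 (π/2)) := by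
    intro a ha b hb hab
    have hta : 0 < Real.tan a := Real.tan_pos_of_pos_of_lt_pi_div_two ha.1 ha.2
    have htb : 0 < Real.tan b := Real.tan_pos_of_pos_of_lt_pi_div_two hb.1 hb.2
    simp only at hab
    have : Real.tan a = Real.tan b := by nlinarith [hab, hta, htb]
    exact Real.strictMonoOn_tan.injOn ⟨by linarith [ha.1, hπ2], ha.2⟩
      ⟨by linarith [hb.1, hπ2], hb.2⟩ this
  rw [← himg, MeasureTheory.integral_image_eq_integral_abs_deriv_smul
    measurableSet_Ioo hderiv hinj]
  have hcong : ∀ φ ∈ Ioo (0:ℝ) (π/2),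
      |2 * Real.tan φ * (1 / Real.cos φ ^ 2)| •
        ((Real.tan φ ^ 2 / (Real.tan φ ^ 2 + 1)) ^ k *
          (Real.sqrt (4 * Real.tan φ ^ 2) /
            (2 * π * Real.tan φ ^ 2 * (1 + Real.tan φ ^ 2))))
      = 2/π * Real.sin φ ^ (2*k) := by
    intro φ hφ
    have hc : 0 < Real.cos φ := Real.cos_pos_of_mem_Ioo ⟨by linarith [hφ.1, hπ2], hφ.2⟩
    have hs : 0 < Real.sin φ := Real.sin_pos_of_pos_of_lt_pi hφ.1 (by linarith [hφ.2, Real.pi_pos])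
    have ht : 0 < Real.tan φ := Real.tan_pos_of_pos_of_lt_pi_div_two hφ.1 hφ.2
    have h1 : Real.sqrt (4 * Real.tan φ ^ 2) = 2 * Real.tan φ := by
      rw [show (4:ℝ) * Real.tan φ ^ 2 = (2 * Real.tan φ)^2 by ring,
        Real.sqrt_sq (by positivity)]
    have habs : |2 * Real.tan φ * (1 / Real.cos φ ^ 2)| = 2 * Real.tan φ * (1 / Real.cos φ ^ 2) :=
      abs_of_pos (by positivity)
    have hpow : Real.sin φ ^ (2*k) = (Real.sin φ ^ 2) ^ k := pow_mul _ 2 k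
    have hsin2 : Real.tan φ ^ 2 / (Real.tan φ ^ 2 + 1) = Real.sin φ ^ 2 := by
      rw [Real.tan_eq_sin_div_cos]
      field_simp
      rw [Real.sin_sq_add_cos_sq]
    rw [smul_eq_mul, habs, h1, hpow, hsin2, Real.tan_eq_sin_div_cos]
    field_simp
    ring
    rw [Real.cos_sq_add_sin_sq]
  rw [MeasureTheory.setIntegral_congr_fun measurableSet_Ioo hcong]
  rw [MeasureTheory.integral_const_mul, ← MeasureTheory.integral_Ioc_eq_integral_Ioo,
    ← intervalIntegral.integral_of_le (le_of_lt hπ2), sin_pow_int]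
  have : π ≠ 0 := Real.pi_ne_zero
  field_simp

noncomputable def fG (k : ℕ) (t x : ℝ) : ℝ :=
  (x / (x + 1 / t)) ^ k *
    (Real.sqrt ((4 - (1 - t) ^ 2 * x) * x) / (2 * π * x * (1 + t * x)))

noncomputable def fBound (x : ℝ) : ℝ := 1 / (π * (Real.sqrt x * (1 + x / 2)))

lemma fG_meas (k : ℕ) (t : ℝ) : AEStronglyMeasurable (fG k t) (volume.restrict (Ioi 0)) := by
  apply Measurable.aestronglyMeasurable
  unfold fG
  fun_prop

lemma fG_le_bound (k : ℕ) {t x : ℝ} (ht : 1/2 < t) (ht2 : t < 2) (hx : 0 < x) :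
    ‖fG k t x‖ ≤ fBound x := by
  have ht0 : 0 < t := by linarith
  have hxt : 0 < x + 1/t := by positivity
  have hsx : 0 < Real.sqrt x := Real.sqrt_pos.2 hx
  have hGnn : 0 ≤ fG k t x := by
    unfold fG
    have := Real.sqrt_nonneg ((4 - (1 - t) ^ 2 * x) * x)
    have := Real.pi_pos
    positivity
  rw [Real.norm_eq_abs, abs_of_nonneg hGnn]
  have hpow : (x / (x + 1/t)) ^ k ≤ 1 := by
    apply pow_le_one₀ (by positivity)
    apply div_le_one_of_le₀ (by linarith [one_div_pos.2 ht0 ]) hxt.le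
  have hsq : Real.sqrt ((4 - (1 - t) ^ 2 * x) * x) ≤ 2 * Real.sqrt x := by
    have h4 : Real.sqrt (4 * x) = 2 * Real.sqrt x := by
      rw [show (4:ℝ) * x = 2^2 * x by ring, Real.sqrt_mul (by positivity),
        Real.sqrt_sq (by norm_num : (0:ℝ) ≤ 2)]
    rw [← h4]
    apply Real.sqrt_le_sqrt
    nlinarith [mul_nonneg (sq_nonneg (1 - t)) (sq_nonneg x)]
  have hπ := Real.pi_pos
  have hden2 : 2 * π * x * (1 + x/2) ≤ 2 * π * x * (1 + t * x) := by
    nlinarith [mul_nonneg (mul_nonneg hπ.le hx.le)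
      (mul_nonneg (by linarith : (0:ℝ) ≤ t - 1/2) hx.le)]
  have hden2' : 0 < 2 * π * x * (1 + x/2) := by positivity
  have key : Real.sqrt ((4 - (1 - t) ^ 2 * x) * x) / (2 * π * x * (1 + t * x)) ≤ fBound x := by
    have h1 : Real.sqrt ((4 - (1 - t) ^ 2 * x) * x) / (2 * π * x * (1 + t * x))
        ≤ 2 * Real.sqrt x / (2 * π * x * (1 + x/2)) := by
      apply div_le_div₀ (by positivity) hsq hden2' hden2
    refine h1.trans_eq ?_
    unfold fBound
    rw [div_eq_div_iff hden2'.ne' (by positivity : (π * (Real.sqrt x * (1 + x / 2))) ≠ 0)]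
    linear_combination (2*π*(1+x/2)) * Real.sq_sqrt hx.le
  calc fG k t x ≤ 1 * (Real.sqrt ((4 - (1 - t) ^ 2 * x) * x) / (2 * π * x * (1 + t * x))) := by
        unfold fG
        apply mul_le_mul_of_nonneg_right hpow (by positivity)
    _ ≤ fBound x := by rw [one_mul]; exact key

lemma fBound_integrable : IntegrableOn fBound (Ioi 0) := by
  have hπ := Real.pi_pos
  have hmeas : Measurable fBound := by unfold fBound; fun_prop
  have h1 : IntegrableOn fBound (Ioc 0 1) := by
    have hrpow : IntegrableOn (fun x : ℝ => x ^ (-(1:ℝ)/2)) (Ioc 0 1) :=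
      (intervalIntegrable_iff_integrableOn_Ioc_of_le (by norm_num : (0:ℝ) ≤ 1)).1
        (intervalIntegral.intervalIntegrable_rpow' (by norm_num))
    have hint : IntegrableOn (fun x : ℝ => (1/π) * x ^ (-(1:ℝ)/2)) (Ioc 0 1) :=
      hrpow.const_mul _
    apply hint.mono' (hmeas.aestronglyMeasurable)
    filter_upwards [ae_restrict_mem measurableSet_Ioc] with x hx
    have hx0 : 0 < x := hx.1
    have hsx : 0 < Real.sqrt x := Real.sqrt_pos.2 hx0
    rw [Real.norm_eq_abs, abs_of_nonneg (by unfold fBound; positivity)]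
    have hrp : x ^ (-(1:ℝ)/2) = 1 / Real.sqrt x := by
      rw [Real.sqrt_eq_rpow, one_div, ← Real.rpow_neg hx0.le]
      norm_num
    rw [hrp, show (1/π) * (1/Real.sqrt x) = 1/(π * Real.sqrt x) by
      rw [div_mul_div_comm, one_mul]]
    unfold fBound
    apply one_div_le_one_div_of_le (by positivity)
    nlinarith [mul_pos hπ hsx]
  have h2 : IntegrableOn fBound (Ioi 1) := by
    have hint : IntegrableOn (fun x : ℝ => (2/π) * x ^ (-(3:ℝ)/2)) (Ioi 1) :=
      (integrableOn_Ioi_rpow_of_lt (by norm_num) (by norm_num)).const_mul _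
    apply hint.mono' (hmeas.aestronglyMeasurable)
    filter_upwards [ae_restrict_mem measurableSet_Ioi] with x hx
    have hx0 : (0:ℝ) < x := lt_trans one_pos hx
    have hsx : 0 < Real.sqrt x := Real.sqrt_pos.2 hx0
    rw [Real.norm_eq_abs, abs_of_nonneg (by unfold fBound; positivity)]
    have hrp : x ^ (-(3:ℝ)/2) = 1 / (Real.sqrt x * x) := by
      rw [Real.sqrt_eq_rpow,
        show (-(3:ℝ)/2) = -((1:ℝ)/2 + 1) by norm_num, Real.rpow_neg hx0.le,
        Real.rpow_add hx0, Real.rpow_one]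
      exact (one_div _).symm
    rw [hrp, show (2/π) * (1/(Real.sqrt x * x)) = 2/(π * (Real.sqrt x * x)) by
      rw [div_mul_div_comm, mul_one]]
    unfold fBound
    rw [div_le_div_iff₀ (by positivity) (by positivity)]
    have hx1 : (1:ℝ) < x := hx
    nlinarith [mul_pos hπ hsx, mul_pos (mul_pos hπ hsx) hx0]
  have := h1.union h2
  rwa [Set.Ioc_union_Ioi_eq_Ioi (by norm_num : (0:ℝ) ≤ 1)] at this
lemma fG_int_eq (k : ℕ) {t : ℝ} (ht : t ∈ Ioo (0:ℝ) 1) :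
    (∫ x in (0:ℝ)..(4 / (1 - t) ^ 2),
        (x / (x + 1 / t)) ^ k *
          ((1 - t) * Real.sqrt ((4 / (1 - t) ^ 2 - x) * x) /
            (2 * π * x * (1 + t * x))))
      = ∫ x in Ioi (0:ℝ), fG k t x := by
  obtain ⟨ht0, ht1⟩ := ht
  have h1t : (0:ℝ) < 1 - t := by linarith
  have hb : (0:ℝ) < 4 / (1 - t) ^ 2 := by positivity
  have hpt : ∀ x : ℝ,
      (x / (x + 1 / t)) ^ k *
        ((1 - t) * Real.sqrt ((4 / (1 - t) ^ 2 - x) * x) / (2 * π * x * (1 + t * x)))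
      = fG k t x := by
    intro x
    unfold fG
    have harg : (4 - (1 - t) ^ 2 * x) * x = (1 - t) ^ 2 * ((4 / (1 - t) ^ 2 - x) * x) := by
      field_simp
    rw [harg, Real.sqrt_mul (sq_nonneg _), Real.sqrt_sq h1t.le]
    try ring
  rw [intervalIntegral.integral_congr (fun x _ => hpt x)]
  rw [intervalIntegral.integral_of_le hb.le]
  refine (MeasureTheory.setIntegral_eq_of_subset_of_forall_diff_eq_zero
    measurableSet_Ioi Set.Ioc_subset_Ioi_self ?_).symm
  intro x hx
  have hx0 : 0 < x := hx.1
  have hbx : 4 / (1 - t) ^ 2 < x := by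
    by_contra h
    exact hx.2 ⟨hx0, not_lt.1 h⟩
  have h4 : 4 < x * (1 - t) ^ 2 := (div_lt_iff₀ (by positivity)).1 hbx
  have harg : (4 - (1 - t) ^ 2 * x) * x ≤ 0 := by nlinarith
  unfold fG
  rw [Real.sqrt_eq_zero_of_nonpos harg]
  simp

lemma fG_tendsto (k : ℕ) {x : ℝ} (hx : 0 < x) :
    Tendsto (fun t => fG k t x) (nhdsWithin 1 (Ioo (0:ℝ) 1)) (nhds (fG k 1 x)) := by
  have hcont : ContinuousAt (fun t => fG k t x) 1 := by
    unfold fG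
    have h1 : ContinuousAt (fun t : ℝ => x + 1 / t) 1 :=
      continuousAt_const.add (continuousAt_const.div continuousAt_id one_ne_zero)
    have hne : x + 1 / (1:ℝ) ≠ 0 := by norm_num; linarith
    have h2 : ContinuousAt (fun t : ℝ => (x / (x + 1 / t)) ^ k) 1 :=
      (continuousAt_const.div h1 hne).pow k
    have h3 : ContinuousAt (fun t : ℝ => Real.sqrt ((4 - (1 - t) ^ 2 * x) * x)) 1 :=
      Real.continuous_sqrt.continuousAt.comp (by fun_prop)
    have h4 : ContinuousAt (fun t : ℝ => 2 * π * x * (1 + t * x)) 1 := by fun_prop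
    have h4ne : 2 * π * x * (1 + 1 * x) ≠ 0 := by
      have := Real.pi_pos; positivity
    exact h2.mul (h3.div h4 h4ne)
  exact hcont.tendsto.mono_left nhdsWithin_le_nhds

lemma fG_one_int (k : ℕ) :
    ∫ x in Ioi (0:ℝ), fG k 1 x = (Nat.centralBinom k : ℝ) / 4 ^ k := by
  rw [← arcsine_int k]
  congr 1
  funext x
  unfold fG
  norm_num

/-- As `t → 1⁻` (with `0 < t < 1`), the Fisher moment functional
`I_k(t) = ∫₀ᵇ (x/(x+1/t))ᵏ p_{1,t}(x) dx` with `b = 4/(1−t)²` converges to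
`C(2k,k)/4ᵏ`, the `k`-th moment of the arcsine law on `[0,2]` divided suitably. -/
theorem fisher_I_k_tendsto_centralBinom (k : ℕ) (hk : 1 ≤ k) :
    Tendsto
      (fun t : ℝ =>
        ∫ x in (0:ℝ)..(4 / (1 - t) ^ 2),
          (x / (x + 1 / t)) ^ k *
            ((1 - t) * Real.sqrt ((4 / (1 - t) ^ 2 - x) * x) /
              (2 * Real.pi * x * (1 + t * x))))
      (nhdsWithin 1 (Set.Ioo (0:ℝ) 1))
      (nhds ((Nat.choose (2 * k) k : ℝ) / 4 ^ k)) := by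
  have hmeas : ∀ᶠ t in nhdsWithin 1 (Set.Ioo (0:ℝ) 1),
      AEStronglyMeasurable (fG k t) (volume.restrict (Ioi 0)) :=
    Filter.Eventually.of_forall (fun t => fG_meas k t)
  have hmem : Ioo (1/2:ℝ) 2 ∈ nhdsWithin 1 (Set.Ioo (0:ℝ) 1) :=
    nhdsWithin_le_nhds (Ioo_mem_nhds (by norm_num) (by norm_num))
  have hbound : ∀ᶠ t in nhdsWithin 1 (Set.Ioo (0:ℝ) 1),
      ∀ᵐ x ∂(volume.restrict (Ioi 0)), ‖fG k t x‖ ≤ fBound x := by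
    filter_upwards [hmem] with t ht
    rw [ae_restrict_iff' measurableSet_Ioi]
    exact ae_of_all _ (fun x hx => fG_le_bound k ht.1 ht.2 hx)
  have hlim : ∀ᵐ x ∂(volume.restrict (Ioi 0)),
      Filter.Tendsto (fun t => fG k t x) (nhdsWithin 1 (Set.Ioo (0:ℝ) 1)) (nhds (fG k 1 x)) := by
    rw [ae_restrict_iff' measurableSet_Ioi]
    exact ae_of_all _ (fun x hx => fG_tendsto k hx)
  have hDCT := MeasureTheory.tendsto_integral_filter_of_dominated_convergence
    (μ := volume.restrict (Ioi (0:ℝ))) fBound hmeas hbound fBound_integrable hlim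
  rw [fG_one_int] at hDCT
  have hev : (fun t : ℝ => ∫ x in Ioi (0:ℝ), fG k t x)
      =ᶠ[nhdsWithin 1 (Set.Ioo (0:ℝ) 1)]
      (fun t : ℝ =>
        ∫ x in (0:ℝ)..(4 / (1 - t) ^ 2),
          (x / (x + 1 / t)) ^ k *
            ((1 - t) * Real.sqrt ((4 / (1 - t) ^ 2 - x) * x) /
              (2 * Real.pi * x * (1 + t * x)))) := by
    filter_upwards [self_mem_nhdsWithin] with t ht
    exact (fG_int_eq k ht).symm
  have hfin := hDCT.congr' hev
  have hcb : (Nat.centralBinom k : ℝ) = (Nat.choose (2 * k) k : ℝ) := by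
    rw [Nat.centralBinom]
  rwa [hcb] at hfin
end
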